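/- Let ≻ be a strict total order on k-subsets of [n] satisfying consistency, and let R ⊆ [n] be a set of players containing the top 2k players A*_{2k}. If W ⊆ R is a team (k-subset) such that W ≻ A for every team A ⊆ R\W, then W is a Condorcet winning team, i.e., W ≻ B for every team B ⊆ [n] disjoint from W. -/

import Mathlib

open Classical in
/-- if R contains the top 2k players (those dominated by fewer than 2k
players) and W ⊆ R beats every team inside R \ W, then W is a Condorcet winning team. -/
theorem stmt6 (n k : ℕ) (hk : 1 ≤ k) (hkn : 2*k ≤ n)
    (succ : Finset (Fin n) → Finset (Fin n) → Prop)
    (htrans : ∀ A B C, succ A B → succ B C → succ A C)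
    (hasym : ∀ A B, succ A B → ¬ succ B A)
    (htotal : ∀ A B : Finset (Fin n), A.card = k → B.card = k → A ≠ B →
      (succ A B ∨ succ B A))
    (hcons : ∀ x y : Fin n, x ≠ y →
      (∀ S : Finset (Fin n), S.card = k-1 → x ∉ S → y ∉ S → succ (insert x S) (insert y S)) ∨
      (∀ S : Finset (Fin n), S.card = k-1 → x ∉ S → y ∉ S → succ (insert y S) (insert x S)))
    (R : Finset (Fin n))
    (hR : ∀ b : Fin n,
      (Finset.univ.filter (fun x : Fin n => ∀ S : Finset (Fin n), S.card = k-1 →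
        x ∉ S → b ∉ S → succ (insert x S) (insert b S))).card < 2*k → b ∈ R)
    (W : Finset (Fin n)) (hWR : W ⊆ R) (hW : W.card = k)
    (hbeat : ∀ A : Finset (Fin n), A ⊆ R \ W → A.card = k → succ W A) :
    ∀ B : Finset (Fin n), B.card = k → Disjoint W B → succ W B := by
  classical
  -- dominator set
  set D : Fin n → Finset (Fin n) := fun b =>
    Finset.univ.filter (fun x : Fin n => ∀ S : Finset (Fin n), S.card = k-1 →
      x ∉ S → b ∉ S → succ (insert x S) (insert b S)) with hD
  have hmemD : ∀ x b : Fin n, x ∈ D b ↔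
      (∀ S : Finset (Fin n), S.card = k-1 → x ∉ S → b ∉ S →
        succ (insert x S) (insert b S)) := by
    intro x b; simp [hD]
  have hR' : ∀ b : Fin n, (D b).card < 2*k → b ∈ R := hR
  -- existence of avoiding sets
  have hexS1 : ∀ x : Fin n, ∃ S : Finset (Fin n), S.card = k-1 ∧ x ∉ S := by
    intro x
    have hc : k - 1 ≤ (Finset.univ \ {x} : Finset (Fin n)).card := by
      rw [Finset.card_sdiff_of_subset (by simp)]
      simp [Finset.card_univ]; omega
    obtain ⟨S, hS, hSc⟩ := Finset.exists_subset_card_eq hc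
    refine ⟨S, hSc, fun hx => ?_⟩
    have := hS hx; simp at this
  have hexS2 : ∀ x y : Fin n, x ≠ y → ∃ S : Finset (Fin n),
      S.card = k-1 ∧ x ∉ S ∧ y ∉ S := by
    intro x y hxy
    have hc : k - 1 ≤ (Finset.univ \ {x, y} : Finset (Fin n)).card := by
      rw [Finset.card_sdiff_of_subset (by simp)]
      have : ({x, y} : Finset (Fin n)).card ≤ 2 := Finset.card_insert_le _ _ |>.trans (by simp)
      have hu : (Finset.univ : Finset (Fin n)).card = n := by simp
      omega
    obtain ⟨S, hS, hSc⟩ := Finset.exists_subset_card_eq hc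
    refine ⟨S, hSc, fun hx => ?_, fun hy => ?_⟩
    · have := hS hx; simp at this
    · have := hS hy; simp at this
  -- irreflexivity
  have hirr : ∀ x : Fin n, x ∉ D x := by
    intro x hx
    rw [hmemD] at hx
    obtain ⟨S, hSc, hxS⟩ := hexS1 x
    exact hasym _ _ (hx S hSc hxS hxS) (hx S hSc hxS hxS)
  -- asymmetry
  have hdasym : ∀ x y : Fin n, x ≠ y → x ∈ D y → y ∈ D x → False := by
    intro x y hxy hx hy
    rw [hmemD] at hx hy
    obtain ⟨S, hSc, hxS, hyS⟩ := hexS2 x y hxy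
    exact hasym _ _ (hx S hSc hxS hyS) (hy S hSc hyS hxS)
  -- totality
  have hdtot : ∀ x y : Fin n, x ≠ y → x ∈ D y ∨ y ∈ D x := by
    intro x y hxy
    rcases hcons x y hxy with h | h
    · left; rw [hmemD]; exact h
    · right; rw [hmemD]; intro S hSc hyS hxS; exact h S hSc hxS hyS
  intro B₀ hB₀ hdisj₀
  suffices H : ∀ m : ℕ, ∀ B : Finset (Fin n), (B \ R).card = m → B.card = k →
      Disjoint W B → succ W B by
    exact H _ B₀ rfl hB₀ hdisj₀
  intro m
  induction m using Nat.strong_induction_on with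
  | _ m ih =>
  intro B hm hB hdisj
  rcases Finset.eq_empty_or_nonempty (B \ R) with hBR | ⟨b, hb⟩
  · -- B ⊆ R, so B ⊆ R \ W
    have hBsub : B ⊆ R := by
      intro z hz
      by_contra hzR
      have : z ∈ B \ R := Finset.mem_sdiff.mpr ⟨hz, hzR⟩
      simp [hBR] at this
    exact hbeat B (Finset.subset_sdiff.mpr ⟨hBsub, hdisj.symm⟩) hB
  · obtain ⟨hbB, hbR⟩ := Finset.mem_sdiff.mp hb
    have hDb : 2*k ≤ (D b).card := by
      by_contra h
      exact hbR (hR' b (by omega))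
    -- n ≥ 2k+1
    have hn : 2*k + 1 ≤ n := by
      have h1 : (insert b (D b)).card = (D b).card + 1 :=
        Finset.card_insert_of_notMem (hirr b)
      have h2 : (insert b (D b)).card ≤ n := by
        have := Finset.card_le_univ (insert b (D b))
        simpa using this
      omega
    have hexS3 : ∀ x y z : Fin n, x ≠ y → y ≠ z → x ≠ z →
        ∃ S : Finset (Fin n), S.card = k-1 ∧ x ∉ S ∧ y ∉ S ∧ z ∉ S := by
      intro x y z hxy hyz hxz
      have hc : k - 1 ≤ (Finset.univ \ {x, y, z} : Finset (Fin n)).card := by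
        rw [Finset.card_sdiff_of_subset (by simp)]
        have : ({x, y, z} : Finset (Fin n)).card ≤ 3 :=
          (Finset.card_insert_le _ _).trans (by
            have := Finset.card_insert_le y ({z} : Finset (Fin n)); simp at this ⊢; omega)
        have hu : (Finset.univ : Finset (Fin n)).card = n := by simp
        omega
      obtain ⟨S, hS, hSc⟩ := Finset.exists_subset_card_eq hc
      refine ⟨S, hSc, fun h => ?_, fun h => ?_, fun h => ?_⟩
      · have := hS h; simp at this
      · have := hS h; simp at this
      · have := hS h; simp at this
    -- transitivity of domination
    have hdt : ∀ u v w : Fin n, u ≠ v → v ≠ w → u ≠ w →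
        u ∈ D v → v ∈ D w → u ∈ D w := by
      intro u v w huv hvw huw hu hv
      rcases hdtot u w huw with h | h
      · exact h
      · exfalso
        obtain ⟨S, hSc, huS, hvS, hwS⟩ := hexS3 u v w huv hvw huw
        rw [hmemD] at hu hv h
        have h1 := hu S hSc huS hvS
        have h2 := hv S hSc hvS hwS
        have h3 := h S hSc hwS huS
        exact hasym _ _ (htrans _ _ _ (htrans _ _ _ h1 h2) h3)
          (htrans _ _ _ (htrans _ _ _ h1 h2) h3)
    -- D u ⊆ (D v).erase u whenever u dominates v
    have hDsub : ∀ u v : Fin n, u ∈ D v → D u ⊆ (D v).erase u := by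
      intro u v hu z hz
      have hzu : z ≠ u := fun h => hirr u (h ▸ hz)
      have huv : u ≠ v := fun h => hirr v (h ▸ hu)
      have hzv : z ≠ v := by
        intro h
        exact hdasym u v huv hu (h ▸ hz)
      exact Finset.mem_erase.mpr ⟨hzu, hdt z u v hzu huv hzv hz hu⟩
    have hWB : (W ∪ B).card = 2*k := by
      rw [Finset.card_union_of_disjoint hdisj, hW, hB]; ring
    have hbWB : b ∈ W ∪ B := Finset.mem_union_right _ hbB
    -- E := D b \ (W ∪ B) is nonempty
    have hEne : ((D b) \ (W ∪ B)).Nonempty := by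
      have hsub : D b ⊆ ((D b) \ (W ∪ B)) ∪ ((W ∪ B).erase b) := by
        intro z hz
        by_cases hzWB : z ∈ W ∪ B
        · refine Finset.mem_union_right _ (Finset.mem_erase.mpr ⟨?_, hzWB⟩)
          intro h; exact hirr b (h ▸ hz)
        · exact Finset.mem_union_left _ (Finset.mem_sdiff.mpr ⟨hz, hzWB⟩)
      have h1 := Finset.card_le_card hsub
      have h2 := Finset.card_union_le ((D b) \ (W ∪ B)) ((W ∪ B).erase b)
      rw [Finset.card_erase_of_mem hbWB, hWB] at h2
      rw [← Finset.card_pos]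
      omega
    obtain ⟨x, hxE, hxmin⟩ :=
      Finset.exists_min_image ((D b) \ (W ∪ B)) (fun z => (D z).card) hEne
    obtain ⟨hxDb, hxWB⟩ := Finset.mem_sdiff.mp hxE
    -- x ∈ R
    have hxR : x ∈ R := by
      by_contra hxR
      have hDx : 2*k ≤ (D x).card := by
        by_contra h
        exact hxR (hR' x (by omega))
      have hsubx : D x ⊆ (D b).erase x := hDsub x b hxDb
      have hbDx : b ∉ D x := by
        intro h
        have := hsubx h
        exact hirr b (Finset.mem_of_mem_erase this)
      have hE'ne : ((D x) \ (W ∪ B)).Nonempty := by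
        have hsub : D x ⊆ ((D x) \ (W ∪ B)) ∪ ((W ∪ B).erase b) := by
          intro z hz
          by_cases hzWB : z ∈ W ∪ B
          · refine Finset.mem_union_right _ (Finset.mem_erase.mpr ⟨?_, hzWB⟩)
            intro h; exact hbDx (h ▸ hz)
          · exact Finset.mem_union_left _ (Finset.mem_sdiff.mpr ⟨hz, hzWB⟩)
        have h1 := Finset.card_le_card hsub
        have h2 := Finset.card_union_le ((D x) \ (W ∪ B)) ((W ∪ B).erase b)
        rw [Finset.card_erase_of_mem hbWB, hWB] at h2
        rw [← Finset.card_pos]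
        omega
      obtain ⟨y, hyE⟩ := hE'ne
      obtain ⟨hyDx, hyWB⟩ := Finset.mem_sdiff.mp hyE
      have hyDb : y ∈ D b := Finset.mem_of_mem_erase (hsubx hyDx)
      have hymin := hxmin y (Finset.mem_sdiff.mpr ⟨hyDb, hyWB⟩)
      have hsuby : D y ⊆ (D x).erase y := hDsub y x hyDx
      have := Finset.card_le_card hsuby
      rw [Finset.card_erase_of_mem hyDx] at this
      have hpos : 0 < (D x).card := Finset.card_pos.mpr ⟨y, hyDx⟩
      omega
    -- build B' = insert x (B.erase b)
    have hxB : x ∉ B := fun h => hxWB (Finset.mem_union_right _ h)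
    have hxW : x ∉ W := fun h => hxWB (Finset.mem_union_left _ h)
    have hxBe : x ∉ B.erase b := fun h => hxB (Finset.mem_of_mem_erase h)
    have hBe : (B.erase b).card = k - 1 := by
      rw [Finset.card_erase_of_mem hbB, hB]
    have hB'card : (insert x (B.erase b)).card = k := by
      rw [Finset.card_insert_of_notMem hxBe, hBe]; omega
    have hsuccB'B : succ (insert x (B.erase b)) B := by
      rw [hmemD] at hxDb
      have := hxDb (B.erase b) hBe hxBe (Finset.notMem_erase b B)
      rwa [Finset.insert_erase hbB] at this
    have hdisj' : Disjoint W (insert x (B.erase b)) := by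
      rw [Finset.disjoint_left]
      intro a haW ha
      rcases Finset.mem_insert.mp ha with h | h
      · exact hxW (h ▸ haW)
      · exact (Finset.disjoint_left.mp hdisj) haW (Finset.mem_of_mem_erase h)
    have hmeas : ((insert x (B.erase b)) \ R).card < m := by
      have hsub : (insert x (B.erase b)) \ R ⊆ (B \ R).erase b := by
        intro z hz
        obtain ⟨hz1, hz2⟩ := Finset.mem_sdiff.mp hz
        rcases Finset.mem_insert.mp hz1 with h | h
        · exact absurd (h ▸ hxR) hz2
        · exact Finset.mem_erase.mpr ⟨(Finset.mem_erase.mp h).1,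
            Finset.mem_sdiff.mpr ⟨Finset.mem_of_mem_erase h, hz2⟩⟩
      have h1 := Finset.card_le_card hsub
      rw [Finset.card_erase_of_mem hb, hm] at h1
      have hmpos : 0 < m := hm ▸ Finset.card_pos.mpr ⟨b, hb⟩
      omega
    have hWB' := ih _ hmeas (insert x (B.erase b)) rfl hB'card hdisj'
    exact htrans _ _ _ hWB' hsuccB'B
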